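/- Let Ω_pl ⊂ ℝ² be an open convex set and let L₁, L₂ be two distinct lines whose intersections with closure(Ω_pl) are nonempty closed segments that are disjoint from each other, and such that the open segments L_i ∩ Ω_pl are nonempty. Then the set C := Ω_pl ∩ H₁ ∩ H₂, where H_i is an open half-plane with ∂H_i = L_i containing the other segment, is a nonempty open convex set whose boundary contains both segments L₁ ∩ Ω_pl and L₂ ∩ Ω_pl. -/

import Mathlib

open MeasureTheory Set Filter Bornology
open scoped RealInnerProductSpace ENNReal NNReal Topology
noncomputable section

abbrev E2 := EuclideanSpace ℝ (Fin 2)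

lemma aux_frontier (C : Set E2) (hCopen : IsOpen C) (x m : E2)
    (hseg : ∀ t ∈ Set.Ioo (0:ℝ) 1, x + t • (m - x) ∈ C) (hx : x ∉ C) :
    x ∈ frontier C := by
  rw [frontier, hCopen.interior_eq]
  refine ⟨?_, hx⟩
  have hcont : Filter.Tendsto (fun t : ℝ => x + t • (m - x)) (𝓝[>] 0) (𝓝 x) := by
    have : Filter.Tendsto (fun t : ℝ => x + t • (m - x)) (𝓝 0) (𝓝 (x + (0:ℝ) • (m - x))) := by
      exact (continuous_const.add (continuous_id.smul continuous_const)).tendsto 0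
    simpa using this.mono_left nhdsWithin_le_nhds
  refine mem_closure_of_tendsto hcont ?_
  filter_upwards [Ioo_mem_nhdsGT_of_mem (by norm_num : (0:ℝ) ∈ Set.Ico (0:ℝ) 1)] with t ht
  exact hseg t ht

theorem stmt7 (Ωpl : Set E2) (ho : IsOpen Ωpl) (hc : Convex ℝ Ωpl)
    (n₁ n₂ : E2) (c₁ c₂ : ℝ) (hn₁ : n₁ ≠ 0) (hn₂ : n₂ ≠ 0)
    (L₁ L₂ H₁ H₂ : Set E2)
    (hL₁ : L₁ = {x : E2 | ⟪n₁, x⟫ = c₁}) (hL₂ : L₂ = {x : E2 | ⟪n₂, x⟫ = c₂})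
    (hH₁ : H₁ = {x : E2 | ⟪n₁, x⟫ < c₁}) (hH₂ : H₂ = {x : E2 | ⟪n₂, x⟫ < c₂})
    (h1ne : (L₁ ∩ Ωpl).Nonempty) (h2ne : (L₂ ∩ Ωpl).Nonempty)
    (h1cl : (L₁ ∩ closure Ωpl).Nonempty) (h2cl : (L₂ ∩ closure Ωpl).Nonempty)
    (hdisj : (L₁ ∩ closure Ωpl) ∩ (L₂ ∩ closure Ωpl) = ∅)
    (h21 : L₂ ∩ closure Ωpl ⊆ H₁) (h12 : L₁ ∩ closure Ωpl ⊆ H₂) :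
    (Ωpl ∩ H₁ ∩ H₂).Nonempty ∧ IsOpen (Ωpl ∩ H₁ ∩ H₂) ∧ Convex ℝ (Ωpl ∩ H₁ ∩ H₂) ∧
      L₁ ∩ Ωpl ⊆ frontier (Ωpl ∩ H₁ ∩ H₂) ∧ L₂ ∩ Ωpl ⊆ frontier (Ωpl ∩ H₁ ∩ H₂) := by
  obtain ⟨x₁, hx₁L, hx₁Ω⟩ := h1ne
  obtain ⟨x₂, hx₂L, hx₂Ω⟩ := h2ne
  have hx₁H₂ : x₁ ∈ H₂ := h12 ⟨hx₁L, subset_closure hx₁Ω⟩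
  have hx₂H₁ : x₂ ∈ H₁ := h21 ⟨hx₂L, subset_closure hx₂Ω⟩
  have hi1 : ⟪n₁, x₁⟫ = c₁ := by rw [hL₁] at hx₁L; exact hx₁L
  have hi2 : ⟪n₂, x₂⟫ = c₂ := by rw [hL₂] at hx₂L; exact hx₂L
  have hi12 : ⟪n₂, x₁⟫ < c₂ := by rw [hH₂] at hx₁H₂; exact hx₁H₂
  have hi21 : ⟪n₁, x₂⟫ < c₁ := by rw [hH₁] at hx₂H₁; exact hx₂H₁
  set m : E2 := (1/2 : ℝ) • x₁ + (1/2 : ℝ) • x₂ with hm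
  have hmΩ : m ∈ Ωpl := hc hx₁Ω hx₂Ω (by norm_num) (by norm_num) (by norm_num)
  have hmi1 : ⟪n₁, m⟫ < c₁ := by
    rw [hm]
    rw [inner_add_right, real_inner_smul_right, real_inner_smul_right]
    linarith
  have hmi2 : ⟪n₂, m⟫ < c₂ := by
    rw [hm]
    rw [inner_add_right, real_inner_smul_right, real_inner_smul_right]
    linarith
  have hmH₁ : m ∈ H₁ := by rw [hH₁]; exact hmi1
  have hmH₂ : m ∈ H₂ := by rw [hH₂]; exact hmi2
  have hopenH₁ : IsOpen H₁ := by
    rw [hH₁]; exact isOpen_lt (continuous_const.inner continuous_id) continuous_const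
  have hopenH₂ : IsOpen H₂ := by
    rw [hH₂]; exact isOpen_lt (continuous_const.inner continuous_id) continuous_const
  have hconvH₁ : Convex ℝ H₁ := by
    rw [hH₁]; exact convex_halfSpace_lt (innerSL ℝ n₁).toLinearMap.isLinear c₁
  have hconvH₂ : Convex ℝ H₂ := by
    rw [hH₂]; exact convex_halfSpace_lt (innerSL ℝ n₂).toLinearMap.isLinear c₂
  have hCopen : IsOpen (Ωpl ∩ H₁ ∩ H₂) := (ho.inter hopenH₁).inter hopenH₂
  have hCconv : Convex ℝ (Ωpl ∩ H₁ ∩ H₂) := (hc.inter hconvH₁).inter hconvH₂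
  have hmC : m ∈ Ωpl ∩ H₁ ∩ H₂ := ⟨⟨hmΩ, hmH₁⟩, hmH₂⟩
  refine ⟨⟨m, hmC⟩, hCopen, hCconv, ?_, ?_⟩
  · rintro x ⟨hxL, hxΩ⟩
    have hxi : ⟪n₁, x⟫ = c₁ := by rw [hL₁] at hxL; exact hxL
    have hxi2 : ⟪n₂, x⟫ < c₂ := by
      have := h12 ⟨hxL, subset_closure hxΩ⟩
      rw [hH₂] at this; exact this
    refine aux_frontier _ hCopen x m (fun t ht => ?_) ?_
    · have hxseg : x + t • (m - x) = (1 - t) • x + t • m := by module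
      refine ⟨⟨?_, ?_⟩, ?_⟩
      · rw [hxseg]
        exact hc hxΩ hmΩ (by linarith [ht.2]) ht.1.le (by ring)
      · rw [hH₁]
        show ⟪n₁, x + t • (m - x)⟫ < c₁
        rw [inner_add_right, real_inner_smul_right, inner_sub_right]
        nlinarith [ht.1, hmi1, hxi]
      · rw [hH₂]
        show ⟪n₂, x + t • (m - x)⟫ < c₂
        rw [inner_add_right, real_inner_smul_right, inner_sub_right]
        nlinarith [ht.1, ht.2, hmi2, hxi2]
    · rintro ⟨⟨-, hxH₁⟩, -⟩
      rw [hH₁] at hxH₁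
      exact absurd hxi (ne_of_lt hxH₁)
  · rintro x ⟨hxL, hxΩ⟩
    have hxi : ⟪n₂, x⟫ = c₂ := by rw [hL₂] at hxL; exact hxL
    have hxi1 : ⟪n₁, x⟫ < c₁ := by
      have := h21 ⟨hxL, subset_closure hxΩ⟩
      rw [hH₁] at this; exact this
    refine aux_frontier _ hCopen x m (fun t ht => ?_) ?_
    · have hxseg : x + t • (m - x) = (1 - t) • x + t • m := by module
      refine ⟨⟨?_, ?_⟩, ?_⟩
      · rw [hxseg]
        exact hc hxΩ hmΩ (by linarith [ht.2]) ht.1.le (by ring)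
      · rw [hH₁]
        show ⟪n₁, x + t • (m - x)⟫ < c₁
        rw [inner_add_right, real_inner_smul_right, inner_sub_right]
        nlinarith [ht.1, ht.2, hmi1, hxi1]
      · rw [hH₂]
        show ⟪n₂, x + t • (m - x)⟫ < c₂
        rw [inner_add_right, real_inner_smul_right, inner_sub_right]
        nlinarith [ht.1, hmi2, hxi]
    · rintro ⟨-, hxH₂⟩
      rw [hH₂] at hxH₂
      exact absurd hxi (ne_of_lt hxH₂)
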